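/- Let F be a real closed field and R a proper convex subring of F (so R ≠ F). If a ∈ R with a > 0 and 1/a > r for all r ∈ R, then R satisfies 'for all sufficiently large x, a·x < 1' (i.e., ∃z ∈ R ∀x ∈ R, x > z → a·x < 1), while F does not satisfy this sentence. Hence the quantifier Q is not preserved from a convex subring to the field when the subring is bounded. -/

import Mathlib

/-- A linearly ordered field is real closed if every nonnegative element has a
square root and every odd degree polynomial has a root. -/
def IsRealClosedOld (F : Type*) [Field F] [LinearOrder F] [IsStrictOrderedRing F] : Prop :=
  (∀ x : F, 0 ≤ x → ∃ y : F, y ^ 2 = x) ∧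
    (∀ p : Polynomial F, Odd p.natDegree → ∃ x : F, p.eval x = 0)

theorem Q_not_preserved_convex_subring {F : Type*} [Field F] [LinearOrder F] [IsStrictOrderedRing F]
    (hF : IsRealClosedOld F) (R : Subring F)
    (hconv : ∀ x ∈ R, ∀ y ∈ R, ∀ z : F, x ≤ z → z ≤ y → z ∈ R)
    (hproper : (R : Set F) ≠ Set.univ)
    (a : F) (ha : a ∈ R) (hapos : 0 < a) (hbig : ∀ r ∈ R, r < a⁻¹) :
    (∃ z ∈ R, ∀ x ∈ R, z < x → a * x < 1) ∧
      ¬ (∃ z : F, ∀ x : F, z < x → a * x < 1) := by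
  constructor
  · refine ⟨0, R.zero_mem, fun x hx _ => ?_⟩
    have hxlt := hbig x hx
    calc a * x < a * a⁻¹ := by exact mul_lt_mul_of_pos_left hxlt hapos
    _ = 1 := mul_inv_cancel₀ (ne_of_gt hapos)
  · rintro ⟨z, hz⟩
    have hx : z < max (z + 1) a⁻¹ := lt_of_lt_of_le (by linarith) (le_max_left _ _)
    have := hz _ hx
    have : a * a⁻¹ ≤ a * max (z + 1) a⁻¹ :=
      mul_le_mul_of_nonneg_left (le_max_right _ _) hapos.le
    rw [mul_inv_cancel₀ (ne_of_gt hapos)] at this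
    linarith [hz _ hx]
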